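/- Let C be a class of functions {±1}^n → {±1} and let 𝒟 be a family of distributions over {±1}^n that is closed under restrictions. Let A be a deterministic learner such that for every D ∈ 𝒟, every f ∈ C, and every k ≥ m, E_{S ~ (D_f)^k}[error(A(S), D_f)] ≤ ε. Let D* be a distribution over {±1}^n that has a depth-d decomposition into distributions in 𝒟, witnessed by a depth-d decision tree T*; let f ∈ C, and let m_train be an integer with m_train ≥ (2^d/ε)·max(2m, 8). Draw S_train consisting of m_train i.i.d. samples from D*_f and define H(ρ) := A((S_train)_ρ) for every restriction ρ. Then E_{S_train}[error(T*∘H, D*_f)] ≤ 2ε. -/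

import Mathlib

open scoped Classical

/-- Points of the cube `{±1}^n`, encoded as `Fin n → Bool`. -/
abbrev Cube (n : ℕ) := Fin n → Bool

/-- Restrictions `ρ ∈ {±1,⋆}^n`, with `none` playing the role of `⋆`. -/
abbrev Rst (n : ℕ) := Fin n → Option Bool

/-- Labeled examples. -/
abbrev Lab (n : ℕ) := Cube n × Bool

/-- `x` is consistent with the restriction `ρ`. -/
def Consistent {n : ℕ} (x : Cube n) (ρ : Rst n) : Prop :=
  ∀ i : Fin n, ∀ b : Bool, ρ i = some b → x i = b

/-- The depth (number of non-⋆ coordinates) of a restriction. -/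
def rdepth {n : ℕ} (ρ : Rst n) : ℕ :=
  (Finset.univ.filter (fun i => ρ i ≠ none)).card

/-- `IsDT n d T` : `T` is the set of leaf restrictions of a depth-`d` decision tree over `{±1}^n`. -/
inductive IsDT (n : ℕ) : ℕ → Finset (Rst n) → Prop
  | leaf : IsDT n 0 {fun _ => none}
  | node {d : ℕ} (i : Fin n) {T₀ T₁ : Finset (Rst n)} :
      IsDT n d T₀ → IsDT n d T₁ →
      (∀ ℓ ∈ T₀, ℓ i = none) → (∀ ℓ ∈ T₁, ℓ i = none) →
      IsDT n (d + 1)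
        (T₀.image (fun ℓ => Function.update ℓ i (some false)) ∪
         T₁.image (fun ℓ => Function.update ℓ i (some true)))

/-- Empirical error of a hypothesis on a labeled multiset. -/
noncomputable def errS {n : ℕ} (h : Cube n → Bool) (S : Multiset (Lab n)) : ℝ :=
  ((S.filter (fun p => h p.1 ≠ p.2)).card : ℝ) / (S.card : ℝ)

/-- Empirical error of a partial (`Option Bool`-valued) hypothesis on a labeled multiset;
`⊥ = none` always counts as a misclassification. -/
noncomputable def errSo {n : ℕ} (h : Cube n → Option Bool) (S : Multiset (Lab n)) : ℝ :=
  ((S.filter (fun p => h p.1 ≠ some p.2)).card : ℝ) / (S.card : ℝ)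

/-- True error of a hypothesis with respect to a distribution on labeled examples. -/
noncomputable def errD {n : ℕ} (h : Cube n → Bool) (D : Lab n → ℝ) : ℝ :=
  ∑ p : Lab n, if h p.1 ≠ p.2 then D p else 0

/-- True error of a partial hypothesis with respect to a distribution on labeled examples. -/
noncomputable def errDo {n : ℕ} (h : Cube n → Option Bool) (D : Lab n → ℝ) : ℝ :=
  ∑ p : Lab n, if h p.1 ≠ some p.2 then D p else 0

/-- The multiset of samples of a tuple. -/
def toMS {α : Type*} {m : ℕ} (y : Fin m → α) : Multiset α := ↑(List.ofFn y)

/-- `T ∘ H` : the decision-tree-composed hypothesis. -/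
noncomputable def treeHyp {n : ℕ} (T : Finset (Rst n)) (H : Rst n → Cube n → Bool)
    (x : Cube n) : Bool :=
  if h : ∃ ℓ, ℓ ∈ T ∧ Consistent x ℓ then H h.choose x else false

/-- `P ∘ H` : the subcube-partition-composed hypothesis (`none` = ⊥ off the partition). -/
noncomputable def partHyp {n s : ℕ} (ρ : Fin s → Rst n) (H : Rst n → Cube n → Bool)
    (x : Cube n) : Option Bool :=
  if h : ∃ i, Consistent x (ρ i) then some (H (ρ h.choose) x) else none

/-- `L ∘ H` : the subcube-list-composed hypothesis (first consistent subcube wins). -/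
noncomputable def listHyp {n : ℕ} (H : Rst n → Cube n → Bool) :
    List (Rst n) → Cube n → Option Bool
  | [], _ => none
  | π :: L, x => if Consistent x π then some (H π x) else listHyp H L x

/-- Mass of a distribution on the subcube of a restriction. -/
noncomputable def rmass {n : ℕ} (D : Cube n → ℝ) (ρ : Rst n) : ℝ :=
  ∑ x ∈ Finset.univ.filter (fun x => Consistent x ρ), D x

/-- `D` conditioned on the subcube of the restriction `ρ`. -/
noncomputable def condD {n : ℕ} (D : Cube n → ℝ) (ρ : Rst n) : Cube n → ℝ :=
  fun x => if Consistent x ρ then D x / rmass D ρ else 0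

/-- The labeled distribution `D_f` of `(x, f(x))`, `x ~ D`. -/
def labD {n : ℕ} (D : Cube n → ℝ) (f : Cube n → Bool) : Lab n → ℝ :=
  fun p => if p.2 = f p.1 then D p.1 else 0

set_option linter.unusedSectionVars false

section PiSums

variable {α : Type*} [Fintype α]

lemma sum_pi_succ {N : ℕ} (G : (Fin (N + 1) → α) → ℝ) :
    ∑ y : Fin (N + 1) → α, G y = ∑ a : α, ∑ z : Fin N → α, G (Fin.cons a z) := by
  rw [← Equiv.sum_comp (Fin.consEquiv fun _ => α) G, Fintype.sum_prod_type]
  rfl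

lemma toMS_cons {N : ℕ} (a : α) (z : Fin N → α) :
    toMS (Fin.cons a z) = a ::ₘ toMS z := by
  simp [toMS, List.ofFn_succ]

lemma prod_cons_W {N : ℕ} (W : α → ℝ) (a : α) (z : Fin N → α) :
    (∏ i, W ((Fin.cons a z : Fin (N+1) → α) i)) = W a * ∏ i, W (z i) := by
  rw [Fin.prod_univ_succ]; simp

/-- factorization of product expectations -/
lemma sum_pi_prod {N : ℕ} (V : Fin N → α → ℝ) :
    ∑ y : Fin N → α, ∏ i, V i (y i) = ∏ i, ∑ a : α, V i a := by
  induction N with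
  | zero => simp
  | succ N ih =>
    rw [sum_pi_succ (fun y => ∏ i, V i (y i))]
    have : ∀ a, ∑ z : Fin N → α, ∏ i, V i (Fin.cons a z i)
        = V 0 a * ∑ z : Fin N → α, ∏ i, (V i.succ) (z i) := by
      intro a
      rw [Finset.mul_sum]
      refine Finset.sum_congr rfl fun z _ => ?_
      rw [Fin.prod_univ_succ]; simp
    simp_rw [this, ih]
    rw [← Finset.sum_mul, Fin.prod_univ_succ]

lemma sum_pi_prod_one {N : ℕ} (W : α → ℝ) (h : ∑ a : α, W a = 1) :
    ∑ y : Fin N → α, ∏ i, W (y i) = 1 := by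
  rw [sum_pi_prod (fun _ => W)]
  simp [h]

lemma toMS_card {N : ℕ} (y : Fin N → α) : Multiset.card (toMS y) = N := by
  simp [toMS]

end PiSums
section GSum

variable {α : Type*} [Fintype α]

/-- expectation of `F` of the `P`-filtered sample multiset, `N` samples from `W` -/
noncomputable def gsum (W : α → ℝ) (P : α → Prop) (N : ℕ) (F : Multiset α → ℝ) : ℝ :=
  ∑ y : Fin N → α, (∏ i, W (y i)) * F ((toMS y).filter P)

/-- expectation of `F` of the whole sample multiset, `k` samples from `W` -/
noncomputable def esum (W : α → ℝ) (k : ℕ) (F : Multiset α → ℝ) : ℝ :=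
  ∑ z : Fin k → α, (∏ i, W (z i)) * F (toMS z)

lemma gsum_succ (W : α → ℝ) (P : α → Prop) (N : ℕ) (F : Multiset α → ℝ) :
    gsum W P (N + 1) F = ∑ a : α, W a *
      (if P a then gsum W P N (fun S => F (a ::ₘ S)) else gsum W P N F) := by
  unfold gsum
  rw [sum_pi_succ (fun y => (∏ i, W (y i)) * F ((toMS y).filter P))]
  refine Finset.sum_congr rfl fun a _ => ?_
  split_ifs with hPa <;> rw [Finset.mul_sum]
  · refine Finset.sum_congr rfl fun z _ => ?_
    rw [prod_cons_W, toMS_cons, Multiset.filter_cons, if_pos hPa, Multiset.singleton_add,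
      mul_assoc]
  · refine Finset.sum_congr rfl fun z _ => ?_
    rw [prod_cons_W, toMS_cons, Multiset.filter_cons, if_neg hPa, zero_add, mul_assoc]

lemma esum_succ (W : α → ℝ) (k : ℕ) (F : Multiset α → ℝ) :
    esum W (k + 1) F = ∑ a : α, W a * esum W k (fun S => F (a ::ₘ S)) := by
  unfold esum
  rw [sum_pi_succ (fun z => (∏ i, W (z i)) * F (toMS z))]
  refine Finset.sum_congr rfl fun a _ => ?_
  rw [Finset.mul_sum]
  refine Finset.sum_congr rfl fun z _ => ?_
  rw [prod_cons_W, toMS_cons, mul_assoc]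

lemma esum_zero (W : α → ℝ) (F : Multiset α → ℝ) : esum W 0 F = F 0 := by
  unfold esum
  rw [Fintype.sum_unique]
  simp [toMS]

/-- abstract Pascal recursion for binomial-weighted sums -/
lemma binom_rec (q : ℝ) (E : ℕ → ℝ) (N : ℕ) :
    (1 - q) * (∑ k ∈ Finset.range (N + 1),
        (N.choose k : ℝ) * q ^ k * (1 - q) ^ (N - k) * E k) +
      (∑ k ∈ Finset.range (N + 1),
        (N.choose k : ℝ) * q ^ k * (1 - q) ^ (N - k) * (q * E (k + 1)))
    = ∑ k ∈ Finset.range (N + 2),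
        ((N + 1).choose k : ℝ) * q ^ k * (1 - q) ^ (N + 1 - k) * E k := by
  rw [Finset.sum_range_succ' (fun k => ((N + 1).choose k : ℝ) * q ^ k * (1 - q) ^ (N + 1 - k) * E k) (N+1)]
  have pascal : ∀ k, (((N + 1).choose (k + 1) : ℝ)) = (N.choose k : ℝ) + (N.choose (k + 1) : ℝ) := by
    intro k; rw [← Nat.cast_add, Nat.choose_succ_succ']
  have split : ∀ k ∈ Finset.range (N + 1),
      ((N + 1).choose (k + 1) : ℝ) * q ^ (k + 1) * (1 - q) ^ (N + 1 - (k + 1)) * E (k + 1)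
      = (N.choose k : ℝ) * q ^ k * (1 - q) ^ (N - k) * (q * E (k + 1))
        + (N.choose (k + 1) : ℝ) * q ^ (k + 1) * (1 - q) ^ (N - k) * E (k + 1) := by
    intro k hk
    have : N + 1 - (k + 1) = N - k := by omega
    rw [this, pascal]; ring
  rw [Finset.sum_congr rfl split, Finset.sum_add_distrib]
  have h1 : (1 - q) * (∑ k ∈ Finset.range (N + 1),
      (N.choose k : ℝ) * q ^ k * (1 - q) ^ (N - k) * E k)
      = ∑ k ∈ Finset.range (N + 1), (N.choose (k + 1) : ℝ) * q ^ (k + 1) * (1 - q) ^ (N - k) * E (k + 1)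
        + ((N + 1).choose 0 : ℝ) * q ^ 0 * (1 - q) ^ (N + 1 - 0) * E 0 := by
    rw [Finset.mul_sum,
      Finset.sum_range_succ' (fun k => (1-q) * ((N.choose k : ℝ) * q ^ k * (1 - q) ^ (N - k) * E k)) N,
      Finset.sum_range_succ (fun k => (N.choose (k + 1) : ℝ) * q ^ (k + 1) * (1 - q) ^ (N - k) * E (k + 1)) N]
    have hNN : (N.choose (N + 1) : ℝ) = 0 := by
      rw [Nat.choose_eq_zero_of_lt (by omega)]; simp
    rw [hNN]
    have : ∀ k ∈ Finset.range N,
        (1 - q) * ((N.choose (k+1) : ℝ) * q ^ (k+1) * (1 - q) ^ (N - (k+1)) * E (k+1))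
        = (N.choose (k + 1) : ℝ) * q ^ (k + 1) * (1 - q) ^ (N - k) * E (k + 1) := by
      intro k hk
      have hk' : k < N := Finset.mem_range.mp hk
      have : N - k = (N - (k+1)) + 1 := by omega
      rw [this, pow_succ]; ring
    rw [Finset.sum_congr rfl this]
    simp
    ring
  rw [h1]
  ring

end GSum
section MainId

variable {α : Type*} [Fintype α]

lemma gsum_eq_sum (W : α → ℝ) (P : α → Prop) (htot : ∑ a : α, W a = 1)
    (q : ℝ) (hq : q ≠ 0) (hqd : ∑ a ∈ Finset.univ.filter P, W a = q)
    (Wc : α → ℝ) (hWc : Wc = fun a => if P a then W a / q else 0)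
    (N : ℕ) (F : Multiset α → ℝ) :
    gsum W P N F = ∑ k ∈ Finset.range (N + 1),
      (N.choose k : ℝ) * q ^ k * (1 - q) ^ (N - k) * esum Wc k F := by
  have hnot : ∑ a ∈ Finset.univ.filter (fun a => ¬ P a), W a = 1 - q := by
    have h := Finset.sum_filter_add_sum_filter_not Finset.univ P W
    rw [hqd, htot] at h; linarith
  induction N generalizing F with
  | zero =>
    have h0 : gsum W P 0 F = F 0 := by
      unfold gsum
      rw [Fintype.sum_unique]
      simp [toMS]
    rw [h0]
    simp [Finset.range_one, esum_zero]
  | succ N ih =>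
    rw [gsum_succ]
    have key : ∀ k, ∑ a ∈ Finset.univ.filter P, W a * esum Wc k (fun S => F (a ::ₘ S))
        = q * esum Wc (k + 1) F := by
      intro k
      rw [esum_succ, Finset.mul_sum,
        ← Finset.sum_filter_add_sum_filter_not Finset.univ P
          (fun a => q * (Wc a * esum Wc k (fun S => F (a ::ₘ S))))]
      have h2 : ∑ a ∈ Finset.univ.filter (fun a => ¬ P a),
          q * (Wc a * esum Wc k (fun S => F (a ::ₘ S))) = 0 := by
        refine Finset.sum_eq_zero fun a ha => ?_
        rw [hWc]
        simp [if_neg (Finset.mem_filter.mp ha).2]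
      rw [h2, add_zero]
      refine Finset.sum_congr rfl fun a ha => ?_
      have hPa := (Finset.mem_filter.mp ha).2
      rw [hWc]
      simp only [if_pos hPa]
      field_simp
    have hsplit : (∑ a : α, W a * (if P a then gsum W P N (fun S => F (a ::ₘ S))
          else gsum W P N F))
        = (∑ a ∈ Finset.univ.filter P, W a * gsum W P N (fun S => F (a ::ₘ S)))
          + (1 - q) * gsum W P N F := by
      rw [← Finset.sum_filter_add_sum_filter_not Finset.univ P
        (fun a => W a * (if P a then gsum W P N (fun S => F (a ::ₘ S)) else gsum W P N F))]
      congr 1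
      · exact Finset.sum_congr rfl fun a ha => by rw [if_pos (Finset.mem_filter.mp ha).2]
      · rw [← hnot, Finset.sum_mul]
        exact Finset.sum_congr rfl fun a ha => by
          rw [if_neg (Finset.mem_filter.mp ha).2, mul_comm]
    rw [hsplit]
    have hfirst : ∑ a ∈ Finset.univ.filter P, W a * gsum W P N (fun S => F (a ::ₘ S))
        = ∑ k ∈ Finset.range (N + 1),
            (N.choose k : ℝ) * q ^ k * (1 - q) ^ (N - k) * (q * esum Wc (k + 1) F) := by
      calc ∑ a ∈ Finset.univ.filter P, W a * gsum W P N (fun S => F (a ::ₘ S))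
          = ∑ a ∈ Finset.univ.filter P, ∑ k ∈ Finset.range (N + 1),
              W a * ((N.choose k : ℝ) * q ^ k * (1 - q) ^ (N - k)
                * esum Wc k (fun S => F (a ::ₘ S))) := by
            refine Finset.sum_congr rfl fun a _ => ?_
            rw [ih, Finset.mul_sum]
        _ = ∑ k ∈ Finset.range (N + 1), ∑ a ∈ Finset.univ.filter P,
              W a * ((N.choose k : ℝ) * q ^ k * (1 - q) ^ (N - k)
                * esum Wc k (fun S => F (a ::ₘ S))) := Finset.sum_comm
        _ = ∑ k ∈ Finset.range (N + 1),
              (N.choose k : ℝ) * q ^ k * (1 - q) ^ (N - k) * (q * esum Wc (k + 1) F) := by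
            refine Finset.sum_congr rfl fun k _ => ?_
            rw [← key k, Finset.mul_sum]
            refine Finset.sum_congr rfl fun a _ => ?_
            ring
    rw [hfirst, ih F, add_comm, binom_rec]

lemma esum_nonneg (W : α → ℝ) (hW : ∀ a, 0 ≤ W a) (k : ℕ)
    (F : Multiset α → ℝ) (hF : ∀ S, 0 ≤ F S) : 0 ≤ esum W k F := by
  refine Finset.sum_nonneg fun z _ => mul_nonneg (Finset.prod_nonneg fun i _ => hW _) (hF _)

lemma esum_le_one (W : α → ℝ) (hW : ∀ a, 0 ≤ W a) (htot : ∑ a : α, W a = 1) (k : ℕ)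
    (F : Multiset α → ℝ) (hF : ∀ S, F S ≤ 1) : esum W k F ≤ 1 := by
  calc esum W k F ≤ ∑ z : Fin k → α, (∏ i, W (z i)) * 1 := by
        refine Finset.sum_le_sum fun z _ => ?_
        exact mul_le_mul_of_nonneg_left (hF _) (Finset.prod_nonneg fun i _ => hW _)
    _ = 1 := by simp_rw [mul_one]; exact sum_pi_prod_one W htot

lemma esum_indicator (W : α → ℝ) (htot : ∑ a : α, W a = 1) (m k : ℕ) :
    esum W k (fun S => if Multiset.card S < m then (1:ℝ) else 0)
      = if k < m then (1:ℝ) else 0 := by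
  unfold esum
  simp only [toMS_card]
  split_ifs with h
  · simp_rw [mul_one]; exact sum_pi_prod_one W htot
  · simp

end MainId
section Moments

variable {α : Type*} [Fintype α]

lemma exp_one (W : α → ℝ) (htot : ∑ a : α, W a = 1) {N : ℕ} (i : Fin N) (b : α → ℝ) :
    ∑ y : Fin N → α, (∏ k, W (y k)) * b (y i) = ∑ a : α, W a * b a := by
  set V : Fin N → α → ℝ := fun k a => if k = i then W a * b a else W a with hV
  have h1 : ∀ y : Fin N → α, (∏ k, W (y k)) * b (y i) = ∏ k, V k (y k) := by
    intro y
    rw [← Finset.mul_prod_erase Finset.univ (fun k => V k (y k)) (Finset.mem_univ i),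
      ← Finset.mul_prod_erase Finset.univ (fun k => W (y k)) (Finset.mem_univ i)]
    have h2 : ∏ k ∈ Finset.univ.erase i, V k (y k)
        = ∏ k ∈ Finset.univ.erase i, W (y k) := by
      refine Finset.prod_congr rfl fun k hk => ?_
      rw [hV]; simp only [if_neg (Finset.mem_erase.mp hk).1]
    rw [h2, hV]
    simp only [eq_self_iff_true, if_true]
    ring
  simp_rw [h1, sum_pi_prod V]
  rw [← Finset.mul_prod_erase Finset.univ (fun k => ∑ a : α, V k a) (Finset.mem_univ i)]
  have h3 : ∏ k ∈ Finset.univ.erase i, (∑ a : α, V k a) = 1 := by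
    refine Finset.prod_eq_one fun k hk => ?_
    rw [hV]
    simp only [if_neg (Finset.mem_erase.mp hk).1]
    exact htot
  rw [h3, hV]
  simp only [eq_self_iff_true, if_true, mul_one]

lemma exp_two (W : α → ℝ) (htot : ∑ a : α, W a = 1) {N : ℕ} {i j : Fin N} (hij : i ≠ j)
    (b c : α → ℝ) :
    ∑ y : Fin N → α, (∏ k, W (y k)) * (b (y i) * c (y j))
      = (∑ a : α, W a * b a) * (∑ a : α, W a * c a) := by
  set V : Fin N → α → ℝ :=
    fun k a => if k = i then W a * b a else if k = j then W a * c a else W a with hV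
  have hji : j ≠ i := fun h => hij h.symm
  have hjmem : j ∈ Finset.univ.erase i := Finset.mem_erase.mpr ⟨hji, Finset.mem_univ j⟩
  have h1 : ∀ y : Fin N → α, (∏ k, W (y k)) * (b (y i) * c (y j)) = ∏ k, V k (y k) := by
    intro y
    rw [← Finset.mul_prod_erase Finset.univ (fun k => V k (y k)) (Finset.mem_univ i),
      ← Finset.mul_prod_erase _ (fun k => V k (y k)) hjmem,
      ← Finset.mul_prod_erase Finset.univ (fun k => W (y k)) (Finset.mem_univ i),
      ← Finset.mul_prod_erase _ (fun k => W (y k)) hjmem]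
    have h2 : ∏ k ∈ (Finset.univ.erase i).erase j, V k (y k)
        = ∏ k ∈ (Finset.univ.erase i).erase j, W (y k) := by
      refine Finset.prod_congr rfl fun k hk => ?_
      have hk1 := (Finset.mem_erase.mp hk).1
      have hk2 := (Finset.mem_erase.mp (Finset.mem_erase.mp hk).2).1
      rw [hV]; simp only [if_neg hk2, if_neg hk1]
    rw [h2, hV]
    simp only [eq_self_iff_true, if_true, if_neg hji]
    ring
  simp_rw [h1, sum_pi_prod V]
  rw [← Finset.mul_prod_erase Finset.univ (fun k => ∑ a : α, V k a) (Finset.mem_univ i),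
    ← Finset.mul_prod_erase _ (fun k => ∑ a : α, V k a) hjmem]
  have h3 : ∏ k ∈ (Finset.univ.erase i).erase j, (∑ a : α, V k a) = 1 := by
    refine Finset.prod_eq_one fun k hk => ?_
    have hk1 := (Finset.mem_erase.mp hk).1
    have hk2 := (Finset.mem_erase.mp (Finset.mem_erase.mp hk).2).1
    rw [hV]
    simp only [if_neg hk2, if_neg hk1]
    exact htot
  rw [h3, hV]
  simp only [eq_self_iff_true, if_true, if_neg hji, mul_one]

lemma card_filter_toMS (P : α → Prop) {N : ℕ} (y : Fin N → α) :
    ((Multiset.filter P (toMS y)).card : ℝ)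
      = ∑ i, (if P (y i) then (1:ℝ) else 0) := by
  induction N with
  | zero =>
    have : y = fun i => (i.elim0 : α) := Subsingleton.elim _ _
    subst this
    simp [toMS]
  | succ N ih =>
    have hy : y = Fin.cons (y 0) (fun i => y i.succ) := by
      funext i
      exact (Fin.cons_self_tail y ▸ rfl)
    rw [hy, toMS_cons, Multiset.filter_cons, Fin.sum_univ_succ]
    simp only [Fin.cons_zero, Fin.cons_succ]
    rw [Multiset.card_add, Nat.cast_add, ih (fun i => y i.succ)]
    split_ifs with h <;> simp

lemma variance_eq (W : α → ℝ) (P : α → Prop) (htot : ∑ a : α, W a = 1)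
    (q : ℝ) (hqd : ∑ a ∈ Finset.univ.filter P, W a = q) (N : ℕ) :
    ∑ y : Fin N → α, (∏ k, W (y k)) *
        ((N * q : ℝ) - ((Multiset.filter P (toMS y)).card : ℝ)) ^ 2
      = N * (q - q ^ 2) := by
  have hchi : ∑ a : α, W a * (if P a then (1:ℝ) else 0) = q := by
    rw [← hqd, Finset.sum_filter]
    refine Finset.sum_congr rfl fun a _ => ?_
    split_ifs <;> simp
  have hmean0 : ∑ a : α, W a * (q - (if P a then (1:ℝ) else 0)) = 0 := by
    simp_rw [mul_sub]
    rw [Finset.sum_sub_distrib, ← Finset.sum_mul, htot, hchi]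
    ring
  have hdiag : ∑ a : α, W a * ((q - (if P a then (1:ℝ) else 0))
      * (q - (if P a then (1:ℝ) else 0))) = q - q ^ 2 := by
    have : ∀ a : α, W a * ((q - (if P a then (1:ℝ) else 0))
        * (q - (if P a then (1:ℝ) else 0)))
        = q ^ 2 * W a - 2 * q * (W a * (if P a then (1:ℝ) else 0))
          + W a * (if P a then (1:ℝ) else 0) := by
      intro a; split_ifs <;> ring
    simp_rw [this]
    rw [Finset.sum_add_distrib, Finset.sum_sub_distrib, ← Finset.mul_sum, ← Finset.mul_sum,
      htot, hchi]
    ring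
  have hrw : ∀ y : Fin N → α,
      ((N * q : ℝ) - ((Multiset.filter P (toMS y)).card : ℝ)) ^ 2
      = ∑ i : Fin N, ∑ j : Fin N,
          (q - (if P (y i) then (1:ℝ) else 0)) * (q - (if P (y j) then (1:ℝ) else 0)) := by
    intro y
    rw [← Finset.sum_mul_sum]
    rw [card_filter_toMS P y]
    rw [← sq]
    congr 1
    rw [Finset.sum_sub_distrib, Finset.sum_const, Finset.card_univ, Fintype.card_fin,
      nsmul_eq_mul]
  simp_rw [hrw, Finset.mul_sum]
  rw [Finset.sum_comm]
  have hswap : ∀ i : Fin N, ∑ y : Fin N → α, ∑ j : Fin N, (∏ k, W (y k)) *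
        ((q - (if P (y i) then (1:ℝ) else 0)) * (q - (if P (y j) then (1:ℝ) else 0)))
      = ∑ j : Fin N, ∑ y : Fin N → α, (∏ k, W (y k)) *
        ((q - (if P (y i) then (1:ℝ) else 0)) * (q - (if P (y j) then (1:ℝ) else 0))) := by
    intro i; exact Finset.sum_comm
  rw [Finset.sum_congr rfl fun i _ => hswap i]
  have hij : ∀ i j : Fin N, ∑ y : Fin N → α, (∏ k, W (y k)) *
        ((q - (if P (y i) then (1:ℝ) else 0)) * (q - (if P (y j) then (1:ℝ) else 0)))
      = if j = i then q - q ^ 2 else 0 := by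
    intro i j
    split_ifs with h
    · subst h
      have := exp_one W htot j (fun a => (q - (if P a then (1:ℝ) else 0))
        * (q - (if P a then (1:ℝ) else 0)))
      rw [this, hdiag]
    · have hne : i ≠ j := fun hc => h hc.symm
      rw [exp_two W htot hne (fun a => q - (if P a then (1:ℝ) else 0))
        (fun a => q - (if P a then (1:ℝ) else 0)), hmean0]
      ring
  rw [Finset.sum_congr rfl fun i _ => Finset.sum_congr rfl fun j _ => hij i j]
  simp [Finset.sum_ite_eq]
  ring

end Moments
section Cheb

variable {α : Type*} [Fintype α]

lemma gsum_mono (W : α → ℝ) (P : α → Prop) (N : ℕ) (hW : ∀ a, 0 ≤ W a)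
    {F G : Multiset α → ℝ} (h : ∀ S, F S ≤ G S) :
    gsum W P N F ≤ gsum W P N G := by
  refine Finset.sum_le_sum fun y _ => ?_
  exact mul_le_mul_of_nonneg_left (h _) (Finset.prod_nonneg fun i _ => hW _)

lemma gsum_tail_le (W : α → ℝ) (P : α → Prop) (hW : ∀ a, 0 ≤ W a)
    (htot : ∑ a : α, W a = 1) (q : ℝ) (hq : 0 < q)
    (hqd : ∑ a ∈ Finset.univ.filter P, W a = q) (m N : ℕ)
    (hNq : 0 < (N : ℝ) * q) (hm : 2 * (m : ℝ) ≤ (N : ℝ) * q) :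
    gsum W P N (fun S => if Multiset.card S < m then (1:ℝ) else 0)
      ≤ 4 / ((N : ℝ) * q) := by
  set K : ℝ := ((N : ℝ) * q / 2) ^ 2 with hK
  have hKpos : 0 < K := by positivity
  have hpt : ∀ S : Multiset α, (if Multiset.card S < m then (1:ℝ) else 0)
      ≤ (((N : ℝ) * q) - (Multiset.card S : ℝ)) ^ 2 / K := by
    intro S
    split_ifs with hc
    · have hc' : (Multiset.card S : ℝ) < m := by exact_mod_cast hc
      have h1 : (0:ℝ) ≤ (N : ℝ) * q / 2 := by positivity
      have h2 : (N : ℝ) * q / 2 ≤ (N : ℝ) * q - (Multiset.card S : ℝ) := by linarith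
      rw [one_le_div hKpos]
      exact pow_le_pow_left₀ h1 h2 2
    · positivity
  calc gsum W P N (fun S => if Multiset.card S < m then (1:ℝ) else 0)
      ≤ gsum W P N (fun S => (((N : ℝ) * q) - (Multiset.card S : ℝ)) ^ 2 / K) :=
        gsum_mono W P N hW hpt
    _ = (∑ y : Fin N → α, (∏ k, W (y k)) *
          (((N : ℝ) * q) - ((Multiset.filter P (toMS y)).card : ℝ)) ^ 2) / K := by
        unfold gsum
        rw [Finset.sum_div]
        exact Finset.sum_congr rfl fun y _ => by rw [mul_div_assoc]
    _ = (N : ℝ) * (q - q ^ 2) / K := by rw [variance_eq W P htot q hqd N]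
    _ ≤ 4 / ((N : ℝ) * q) := by
        rw [div_le_div_iff₀ hKpos hNq, hK]
        have hN0 : (0:ℝ) ≤ (N : ℝ) := Nat.cast_nonneg N
        nlinarith [mul_nonneg (mul_nonneg (mul_nonneg hN0 hN0) (mul_nonneg hq.le hq.le)) hq.le]

lemma gsum_main_bound (W : α → ℝ) (P : α → Prop) (hW : ∀ a, 0 ≤ W a)
    (htot : ∑ a : α, W a = 1) (q : ℝ) (hq : 0 < q)
    (hqd : ∑ a ∈ Finset.univ.filter P, W a = q)
    (Wc : α → ℝ) (hWc : Wc = fun a => if P a then W a / q else 0)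
    (ε : ℝ) (hε0 : 0 ≤ ε) (m N : ℕ) (F : Multiset α → ℝ)
    (hF1 : ∀ S, F S ≤ 1)
    (hεk : ∀ k, m ≤ k → esum Wc k F ≤ ε) :
    gsum W P N F ≤ ε +
      gsum W P N (fun S => if Multiset.card S < m then (1:ℝ) else 0) := by
  have hq1 : q ≤ 1 := by
    rw [← hqd, ← htot]
    exact Finset.sum_le_sum_of_subset_of_nonneg (Finset.filter_subset _ _)
      (fun a _ _ => hW a)
  have hWc0 : ∀ a, 0 ≤ Wc a := by
    intro a; rw [hWc]; dsimp only
    split_ifs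
    · exact div_nonneg (hW a) hq.le
    · exact le_refl 0
  have hWctot : ∑ a : α, Wc a = 1 := by
    rw [hWc, ← Finset.sum_filter, ← Finset.sum_div, hqd, div_self hq.ne']
  have hck : ∀ k, (0:ℝ) ≤ (N.choose k : ℝ) * q ^ k * (1 - q) ^ (N - k) := by
    intro k
    have h1q : (0:ℝ) ≤ 1 - q := by linarith
    exact mul_nonneg (mul_nonneg (Nat.cast_nonneg _) (pow_nonneg hq.le _))
      (pow_nonneg h1q _)
  have hsum1 : ∑ k ∈ Finset.range (N + 1),
      (N.choose k : ℝ) * q ^ k * (1 - q) ^ (N - k) = 1 := by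
    have h := gsum_eq_sum W P htot q hq.ne' hqd Wc hWc N (fun _ => (1:ℝ))
    have hg : gsum W P N (fun _ => (1:ℝ)) = 1 := by
      unfold gsum; simp_rw [mul_one]; exact sum_pi_prod_one W htot
    have he : ∀ k, esum Wc k (fun _ => (1:ℝ)) = 1 := fun k => by
      unfold esum; simp_rw [mul_one]; exact sum_pi_prod_one Wc hWctot
    rw [hg] at h
    simp_rw [he, mul_one] at h
    exact h.symm
  rw [gsum_eq_sum W P htot q hq.ne' hqd Wc hWc N F,
    gsum_eq_sum W P htot q hq.ne' hqd Wc hWc N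
      (fun S => if Multiset.card S < m then (1:ℝ) else 0)]
  simp_rw [esum_indicator Wc hWctot m]
  calc ∑ k ∈ Finset.range (N + 1),
        (N.choose k : ℝ) * q ^ k * (1 - q) ^ (N - k) * esum Wc k F
      ≤ ∑ k ∈ Finset.range (N + 1), (N.choose k : ℝ) * q ^ k * (1 - q) ^ (N - k) *
          (ε + if k < m then (1:ℝ) else 0) := by
        refine Finset.sum_le_sum fun k _ => mul_le_mul_of_nonneg_left ?_ (hck k)
        by_cases hk : k < m
        · rw [if_pos hk]
          have h1 := esum_le_one Wc hWc0 hWctot k F hF1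
          linarith
        · rw [if_neg hk]
          have := hεk k (le_of_not_gt hk)
          linarith
    _ = ε + ∑ k ∈ Finset.range (N + 1),
          (N.choose k : ℝ) * q ^ k * (1 - q) ^ (N - k) *
            (if k < m then (1:ℝ) else 0) := by
        simp_rw [mul_add]
        rw [Finset.sum_add_distrib, ← Finset.sum_mul, hsum1, one_mul]
        
end Cheb
section Tree

lemma consistent_update {n : ℕ} {x : Cube n} {ℓ : Rst n} {i : Fin n} (h : ℓ i = none) (b : Bool) :
    Consistent x (Function.update ℓ i (some b)) ↔ Consistent x ℓ ∧ x i = b := by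
  constructor
  · intro hc
    refine ⟨fun j bj hj => ?_, hc i b (by rw [Function.update_self])⟩
    have hji : j ≠ i := by rintro rfl; rw [h] at hj; cases hj
    exact hc j bj (by rw [Function.update_of_ne hji]; exact hj)
  · rintro ⟨hc, hxi⟩ j bj hj
    by_cases hji : j = i
    · subst hji; rw [Function.update_self] at hj; cases hj; exact hxi
    · rw [Function.update_of_ne hji] at hj; exact hc j bj hj

lemma isDT_existsUnique {n d : ℕ} {T : Finset (Rst n)} (hT : IsDT n d T) (x : Cube n) :
    ∃! ℓ, ℓ ∈ T ∧ Consistent x ℓ := by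
  induction hT with
  | leaf =>
    refine ⟨fun _ => none, ⟨Finset.mem_singleton_self _, fun i b hb => by cases hb⟩, ?_⟩
    rintro ℓ ⟨hm, -⟩
    exact Finset.mem_singleton.mp hm
  | @node d i T₀ T₁ hT0 hT1 h0 h1 ih0 ih1 =>
    cases hxi : x i with
    | false =>
      obtain ⟨ℓ₀, ⟨hm0, hc0⟩, hu0⟩ := ih0
      refine ⟨Function.update ℓ₀ i (some false), ⟨?_, ?_⟩, ?_⟩
      · exact Finset.mem_union_left _ (Finset.mem_image_of_mem _ hm0)
      · exact (consistent_update (h0 ℓ₀ hm0) false).mpr ⟨hc0, hxi⟩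
      · rintro ℓ' ⟨hm', hc'⟩
        rcases Finset.mem_union.mp hm' with hm' | hm'
        · obtain ⟨ℓ₁, hℓ₁, rfl⟩ := Finset.mem_image.mp hm'
          obtain ⟨hcℓ₁, -⟩ := (consistent_update (h0 ℓ₁ hℓ₁) false).mp hc'
          rw [hu0 ℓ₁ ⟨hℓ₁, hcℓ₁⟩]
        · obtain ⟨ℓ₁, hℓ₁, rfl⟩ := Finset.mem_image.mp hm'
          obtain ⟨-, hxi'⟩ := (consistent_update (h1 ℓ₁ hℓ₁) true).mp hc'
          rw [hxi] at hxi'; cases hxi'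
    | true =>
      obtain ⟨ℓ₀, ⟨hm0, hc0⟩, hu0⟩ := ih1
      refine ⟨Function.update ℓ₀ i (some true), ⟨?_, ?_⟩, ?_⟩
      · exact Finset.mem_union_right _ (Finset.mem_image_of_mem _ hm0)
      · exact (consistent_update (h1 ℓ₀ hm0) true).mpr ⟨hc0, hxi⟩
      · rintro ℓ' ⟨hm', hc'⟩
        rcases Finset.mem_union.mp hm' with hm' | hm'
        · obtain ⟨ℓ₁, hℓ₁, rfl⟩ := Finset.mem_image.mp hm'
          obtain ⟨-, hxi'⟩ := (consistent_update (h0 ℓ₁ hℓ₁) false).mp hc'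
          rw [hxi] at hxi'; cases hxi'
        · obtain ⟨ℓ₁, hℓ₁, rfl⟩ := Finset.mem_image.mp hm'
          obtain ⟨hcℓ₁, -⟩ := (consistent_update (h1 ℓ₁ hℓ₁) true).mp hc'
          rw [hu0 ℓ₁ ⟨hℓ₁, hcℓ₁⟩]

lemma isDT_card {n d : ℕ} {T : Finset (Rst n)} (hT : IsDT n d T) : T.card ≤ 2 ^ d := by
  induction hT with
  | leaf => simp
  | @node d i T₀ T₁ hT0 hT1 h0 h1 ih0 ih1 =>
    calc (T₀.image (fun ℓ => Function.update ℓ i (some false)) ∪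
            T₁.image (fun ℓ => Function.update ℓ i (some true))).card
        ≤ (T₀.image (fun ℓ => Function.update ℓ i (some false))).card
          + (T₁.image (fun ℓ => Function.update ℓ i (some true))).card :=
          Finset.card_union_le _ _
      _ ≤ T₀.card + T₁.card := add_le_add (Finset.card_image_le) (Finset.card_image_le)
      _ ≤ 2 ^ d + 2 ^ d := add_le_add ih0 ih1
      _ = 2 ^ (d + 1) := by rw [pow_succ]; omega

lemma treeHyp_eq {n d : ℕ} {T : Finset (Rst n)} (hT : IsDT n d T)
    (H : Rst n → Cube n → Bool) {x : Cube n} {ℓ : Rst n}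
    (hm : ℓ ∈ T) (hc : Consistent x ℓ) :
    treeHyp T H x = H ℓ x := by
  unfold treeHyp
  have hex : ∃ ℓ', ℓ' ∈ T ∧ Consistent x ℓ' := ⟨ℓ, hm, hc⟩
  rw [dif_pos hex]
  obtain ⟨ℓ₀, h₀, hu⟩ := isDT_existsUnique hT x
  have h1 : hex.choose = ℓ₀ := hu _ hex.choose_spec
  have h2 : ℓ = ℓ₀ := hu _ ⟨hm, hc⟩
  rw [h1, ← h2]

end Tree
section Dist

variable {n : ℕ}

lemma errD_labD (h : Cube n → Bool) (D : Cube n → ℝ) (f : Cube n → Bool) :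
    errD h (labD D f) = ∑ x : Cube n, if h x = f x then 0 else D x := by
  unfold errD labD
  rw [Fintype.sum_prod_type]
  refine Finset.sum_congr rfl fun x _ => ?_
  rw [Fintype.sum_bool]
  cases hfx : f x <;> cases hhx : h x <;> simp [hfx, hhx]

lemma sum_labD_filter (D : Cube n → ℝ) (f : Cube n → Bool) (Q : Cube n → Prop) :
    ∑ p ∈ Finset.univ.filter (fun p : Lab n => Q p.1), labD D f p
      = ∑ x ∈ Finset.univ.filter Q, D x := by
  rw [Finset.sum_filter, Finset.sum_filter, Fintype.sum_prod_type]
  refine Finset.sum_congr rfl fun x _ => ?_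
  rw [Fintype.sum_bool]
  by_cases hQ : Q x
  · simp only [if_pos hQ, labD]
    cases hfx : f x <;> simp [hfx]
  · simp [hQ]

lemma sum_labD (D : Cube n → ℝ) (f : Cube n → Bool) :
    ∑ p : Lab n, labD D f p = ∑ x : Cube n, D x := by
  have h := sum_labD_filter D f (fun _ => True)
  simpa using h

lemma labD_condD (D : Cube n → ℝ) (ℓ : Rst n) (f : Cube n → Bool) :
    labD (condD D ℓ) f
      = fun p : Lab n => if Consistent p.1 ℓ then labD D f p / rmass D ℓ else 0 := by
  funext p
  simp only [labD, condD]
  by_cases h1 : p.2 = f p.1 <;> by_cases h2 : Consistent p.1 ℓ <;> simp [h1, h2]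

lemma errD_nonneg (h : Cube n → Bool) (D : Lab n → ℝ) (hD : ∀ p, 0 ≤ D p) :
    0 ≤ errD h D := by
  refine Finset.sum_nonneg fun p _ => ?_
  split_ifs
  · exact hD p
  · exact le_refl 0

lemma errD_le_one (h : Cube n → Bool) (D : Lab n → ℝ) (hD : ∀ p, 0 ≤ D p)
    (htot : ∑ p : Lab n, D p = 1) : errD h D ≤ 1 := by
  rw [← htot]
  refine Finset.sum_le_sum fun p _ => ?_
  split_ifs
  · exact le_refl _
  · exact hD p

end Dist

/-- existence-of-a-tree-with-low-error claim. If `A` learns every `D ∈ 𝒟`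
to expected error `ε` from `≥ m` i.i.d. samples, `𝒟` is closed under restrictions, `D*`
has a depth-`d` decomposition into `𝒟` witnessed by `T*`, and `m_train ≥ (2^d/ε)·max(2m,8)`,
then training `A` on the restricted training sets yields `E[error(T*∘H, D*_f)] ≤ 2ε`. -/
theorem true_tree_has_low_true_error
    (n m d : ℕ) (ε : ℝ) (hε : 0 < ε)
    (C : Set (Cube n → Bool)) (𝒟 : Set (Cube n → ℝ))
    (hclosed : ∀ D ∈ 𝒟, ∀ ρ : Rst n, 0 < rmass D ρ → condD D ρ ∈ 𝒟)
    (A : Multiset (Lab n) → Cube n → Bool)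
    (hA : ∀ D ∈ 𝒟, ∀ f ∈ C, ∀ k : ℕ, m ≤ k →
      ∑ y : Fin k → Lab n, (∏ i, labD D f (y i)) * errD (A (toMS y)) (labD D f) ≤ ε)
    (Dstar : Cube n → ℝ) (hD0 : ∀ x, 0 ≤ Dstar x) (hD1 : ∑ x : Cube n, Dstar x = 1)
    (Tstar : Finset (Rst n)) (hTstar : IsDT n d Tstar)
    (hdecomp : ∀ ℓ ∈ Tstar, 0 < rmass Dstar ℓ → condD Dstar ℓ ∈ 𝒟)
    (f : Cube n → Bool) (hf : f ∈ C)
    (mtrain : ℕ) (hmtrain : ((2 : ℝ) ^ d / ε) * max (2 * (m : ℝ)) 8 ≤ (mtrain : ℝ)) :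
    ∑ y : Fin mtrain → Lab n, (∏ i, labD Dstar f (y i)) *
        errD (treeHyp Tstar
                (fun ρ => A ((toMS y).filter (fun p => Consistent p.1 ρ))))
             (labD Dstar f)
      ≤ 2 * ε := by
  classical
  set W : Lab n → ℝ := labD Dstar f with hW
  set M : ℝ := max (2 * (m : ℝ)) 8 with hM
  have hM8 : (8:ℝ) ≤ M := le_max_right _ _
  have hM2m : 2 * (m:ℝ) ≤ M := le_max_left _ _
  have hMpos : (0:ℝ) < M := lt_of_lt_of_le (by norm_num) hM8
  have hNpos : (0:ℝ) < (mtrain : ℝ) :=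
    lt_of_lt_of_le (mul_pos (div_pos (pow_pos two_pos d) hε) hMpos) hmtrain
  have hεN : (2:ℝ) ^ d * M / (mtrain : ℝ) ≤ ε := by
    rw [div_le_iff₀ hNpos]
    have h1 := mul_le_mul_of_nonneg_left hmtrain hε.le
    have h2 : ε * ((2:ℝ) ^ d / ε * M) = (2:ℝ) ^ d * M := by field_simp
    linarith
  have hW0 : ∀ p, 0 ≤ W p := by
    intro p; rw [hW]; unfold labD
    split_ifs
    · exact hD0 _
    · exact le_refl 0
  have hWtot : ∑ p : Lab n, W p = 1 := by rw [hW, sum_labD, hD1]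
  have huniq := isDT_existsUnique hTstar
  -- decomposition of the error over the leaves
  have herr : ∀ H : Rst n → Cube n → Bool,
      errD (treeHyp Tstar H) (labD Dstar f)
        = ∑ ℓ ∈ Tstar, ∑ x ∈ Finset.univ.filter (fun x => Consistent x ℓ),
            (if H ℓ x = f x then (0:ℝ) else Dstar x) := by
    intro H
    rw [errD_labD]
    have hstep : ∀ ℓ : Rst n, ∑ x ∈ Finset.univ.filter (fun x => Consistent x ℓ),
        (if H ℓ x = f x then (0:ℝ) else Dstar x)
        = ∑ x : Cube n, (if Consistent x ℓ
            then (if H ℓ x = f x then (0:ℝ) else Dstar x) else 0) :=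
      fun ℓ => Finset.sum_filter _ _
    simp_rw [hstep]
    rw [Finset.sum_comm]
    refine Finset.sum_congr rfl fun x _ => ?_
    obtain ⟨ℓ₀, ⟨hm0, hc0⟩, hu0⟩ := huniq x
    rw [Finset.sum_eq_single_of_mem ℓ₀ hm0 (fun ℓ hℓ hne => ?_)]
    · rw [if_pos hc0, treeHyp_eq hTstar H hm0 hc0]
    · rw [if_neg]
      intro hc
      exact hne (hu0 ℓ ⟨hℓ, hc⟩)
  -- rewrite the goal as a sum over leaves
  have hgoal : ∑ y : Fin mtrain → Lab n, (∏ i, W (y i)) *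
        errD (treeHyp Tstar
                (fun ρ => A ((toMS y).filter (fun p => Consistent p.1 ρ))))
             (labD Dstar f)
      = ∑ ℓ ∈ Tstar, ∑ y : Fin mtrain → Lab n, (∏ i, W (y i)) *
          ∑ x ∈ Finset.univ.filter (fun x => Consistent x ℓ),
            (if A ((toMS y).filter (fun p => Consistent p.1 ℓ)) x = f x
              then (0:ℝ) else Dstar x) := by
    rw [← Finset.sum_comm]
    refine Finset.sum_congr rfl fun y _ => ?_
    rw [herr (fun ρ => A ((toMS y).filter (fun p => Consistent p.1 ρ))), Finset.mul_sum]
  rw [hgoal]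
  -- the per-leaf bound
  have hperleaf : ∀ ℓ ∈ Tstar, (∑ y : Fin mtrain → Lab n, (∏ i, W (y i)) *
          ∑ x ∈ Finset.univ.filter (fun x => Consistent x ℓ),
            (if A ((toMS y).filter (fun p => Consistent p.1 ℓ)) x = f x
              then (0:ℝ) else Dstar x))
      ≤ rmass Dstar ℓ * ε + M / (mtrain : ℝ) := by
    intro ℓ hℓ
    set q : ℝ := rmass Dstar ℓ with hq'
    set P : Lab n → Prop := fun p => Consistent p.1 ℓ with hP
    have hq0 : 0 ≤ q := by
      rw [hq']; unfold rmass
      exact Finset.sum_nonneg fun x _ => hD0 x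
    have hqd : ∑ p ∈ Finset.univ.filter P, W p = q :=
      sum_labD_filter Dstar f (fun x => Consistent x ℓ)
    rcases eq_or_lt_of_le hq0 with hq | hq
    · -- zero-mass leaf
      have hD0ℓ : ∀ x ∈ Finset.univ.filter (fun x => Consistent x ℓ), Dstar x = 0 := by
        have := (Finset.sum_eq_zero_iff_of_nonneg
          (fun x _ => hD0 x)).mp (hq.symm : (rmass Dstar ℓ : ℝ) = 0)
        exact this
      have hzero : (∑ y : Fin mtrain → Lab n, (∏ i, W (y i)) *
          ∑ x ∈ Finset.univ.filter (fun x => Consistent x ℓ),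
            (if A ((toMS y).filter (fun p => Consistent p.1 ℓ)) x = f x
              then (0:ℝ) else Dstar x)) = 0 := by
        refine Finset.sum_eq_zero fun y _ => ?_
        have : (∑ x ∈ Finset.univ.filter (fun x => Consistent x ℓ),
            (if A ((toMS y).filter (fun p => Consistent p.1 ℓ)) x = f x
              then (0:ℝ) else Dstar x)) = 0 := by
          refine Finset.sum_eq_zero fun x hx => ?_
          rw [hD0ℓ x hx]
          split_ifs <;> rfl
        rw [this, mul_zero]
      rw [hzero]
      have : (0:ℝ) ≤ q * ε + M / (mtrain : ℝ) :=
        add_nonneg (mul_nonneg hq0 hε.le) (div_nonneg hMpos.le hNpos.le)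
      linarith
    · -- positive-mass leaf
      set Wc : Lab n → ℝ := labD (condD Dstar ℓ) f with hWcdef
      have hWc : Wc = fun p : Lab n => if P p then W p / q else 0 := labD_condD Dstar ℓ f
      set F : Multiset (Lab n) → ℝ := fun S => errD (A S) Wc with hF
      have hcond0 : ∀ x, 0 ≤ condD Dstar ℓ x := by
        intro x; unfold condD
        split_ifs
        · exact div_nonneg (hD0 x) hq0
        · exact le_refl 0
      have hcondtot : ∑ x : Cube n, condD Dstar ℓ x = 1 := by
        unfold condD
        rw [← Finset.sum_filter, ← Finset.sum_div]
        exact div_self hq.ne'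
      have hlab0 : ∀ p, 0 ≤ Wc p := by
        intro p; rw [hWcdef]; unfold labD
        split_ifs
        · exact hcond0 _
        · exact le_refl 0
      have hlabtot : ∑ p : Lab n, Wc p = 1 := by rw [hWcdef, sum_labD, hcondtot]
      have hF1 : ∀ S, F S ≤ 1 := fun S => errD_le_one _ _ hlab0 hlabtot
      have hD' : condD Dstar ℓ ∈ 𝒟 := hdecomp ℓ hℓ hq
      have hεk : ∀ k, m ≤ k → esum Wc k F ≤ ε := by
        intro k hk
        have := hA (condD Dstar ℓ) hD' f hf k hk
        rw [hWcdef]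
        exact this
      -- the leaf contribution equals q * gsum
      have hqF : ∀ S, q * F S
          = ∑ x ∈ Finset.univ.filter (fun x => Consistent x ℓ),
              (if A S x = f x then (0:ℝ) else Dstar x) := by
        intro S
        rw [hF]
        dsimp only
        rw [hWcdef, errD_labD, Finset.sum_filter, Finset.mul_sum]
        refine Finset.sum_congr rfl fun x _ => ?_
        unfold condD
        by_cases hc : Consistent x ℓ <;> by_cases he : A S x = f x <;>
          simp [hc, he, ← hq', mul_div_cancel₀ (Dstar x) hq.ne']
      have hCON : (∑ y : Fin mtrain → Lab n, (∏ i, W (y i)) *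
            ∑ x ∈ Finset.univ.filter (fun x => Consistent x ℓ),
              (if A ((toMS y).filter (fun p => Consistent p.1 ℓ)) x = f x
                then (0:ℝ) else Dstar x))
          = q * gsum W P mtrain F := by
        unfold gsum
        rw [Finset.mul_sum]
        refine Finset.sum_congr rfl fun y _ => ?_
        rw [← hqF ((toMS y).filter (fun p => Consistent p.1 ℓ))]
        ring
      rw [hCON]
      by_cases hcase : 2 * (m:ℝ) ≤ (mtrain : ℝ) * q
      · have htail := gsum_tail_le W P hW0 hWtot q hq hqd m mtrain
          (mul_pos hNpos hq) hcase
        have hmain := gsum_main_bound W P hW0 hWtot q hq hqd Wc hWc ε hε.le m mtrain F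
          hF1 hεk
        have hg : gsum W P mtrain F ≤ ε + 4 / ((mtrain : ℝ) * q) := by linarith
        calc q * gsum W P mtrain F ≤ q * (ε + 4 / ((mtrain : ℝ) * q)) :=
              mul_le_mul_of_nonneg_left hg hq0
          _ = q * ε + 4 / (mtrain : ℝ) := by
              field_simp
          _ ≤ q * ε + M / (mtrain : ℝ) := by
              have : (4:ℝ) / (mtrain : ℝ) ≤ M / (mtrain : ℝ) :=
                (div_le_div_iff_of_pos_right hNpos).mpr (by linarith)
              linarith
      · push_neg at hcase
        have hle1 : gsum W P mtrain F ≤ 1 := by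
          have h1 : gsum W P mtrain F ≤ gsum W P mtrain (fun _ => (1:ℝ)) :=
            gsum_mono W P mtrain hW0 hF1
          have h2 : gsum W P mtrain (fun _ => (1:ℝ)) = 1 := by
            unfold gsum; simp_rw [mul_one]; exact sum_pi_prod_one W hWtot
          linarith
        have hqM : q ≤ M / (mtrain : ℝ) := by
          rw [le_div_iff₀ hNpos]
          nlinarith
        have h3 : q * gsum W P mtrain F ≤ q := by
          have := mul_le_mul_of_nonneg_left hle1 hq0
          linarith
        have h4 : (0:ℝ) ≤ q * ε := mul_nonneg hq0 hε.le
        linarith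
  -- sum up
  have hq1 : ∑ ℓ ∈ Tstar, rmass Dstar ℓ = 1 := by
    rw [← hD1]
    unfold rmass
    simp_rw [Finset.sum_filter]
    rw [Finset.sum_comm]
    refine Finset.sum_congr rfl fun x _ => ?_
    obtain ⟨ℓ₀, ⟨hm0, hc0⟩, hu0⟩ := huniq x
    rw [Finset.sum_eq_single_of_mem ℓ₀ hm0 (fun ℓ hℓ hne => ?_)]
    · rw [if_pos hc0]
    · rw [if_neg]
      intro hc
      exact hne (hu0 ℓ ⟨hℓ, hc⟩)
  have hcard : (Tstar.card : ℝ) ≤ 2 ^ d := by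
    exact_mod_cast isDT_card hTstar
  calc ∑ ℓ ∈ Tstar, ∑ y : Fin mtrain → Lab n, (∏ i, W (y i)) *
          ∑ x ∈ Finset.univ.filter (fun x => Consistent x ℓ),
            (if A ((toMS y).filter (fun p => Consistent p.1 ℓ)) x = f x
              then (0:ℝ) else Dstar x)
      ≤ ∑ ℓ ∈ Tstar, (rmass Dstar ℓ * ε + M / (mtrain : ℝ)) :=
        Finset.sum_le_sum hperleaf
    _ = (∑ ℓ ∈ Tstar, rmass Dstar ℓ) * ε + Tstar.card * (M / (mtrain : ℝ)) := by
        rw [Finset.sum_add_distrib, Finset.sum_mul, Finset.sum_const, nsmul_eq_mul]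
    _ ≤ 1 * ε + 2 ^ d * (M / (mtrain : ℝ)) := by
        rw [hq1]
        have : (Tstar.card : ℝ) * (M / (mtrain : ℝ)) ≤ 2 ^ d * (M / (mtrain : ℝ)) :=
          mul_le_mul_of_nonneg_right hcard (div_nonneg hMpos.le hNpos.le)
        linarith
    _ ≤ ε + ε := by
        have : (2:ℝ) ^ d * (M / (mtrain : ℝ)) = 2 ^ d * M / (mtrain : ℝ) := by ring
        rw [one_mul, this]
        linarith
    _ = 2 * ε := by ring
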